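/- Let n ≥ 1, p ≥ 1, let a_1,…,a_p ∈ ℤ^n be primitive vectors that are pairwise non-parallel (a_i is not a real scalar multiple of a_j for i ≠ j), and let f : ℝ^n → ℝ be continuous and such that on each closed chamber of the central hyperplane arrangement ∪_{i=1}^p {y : ⟨a_i,y⟩ = 0} (the closure of each connected component of the complement), f agrees with a linear function x ↦ ⟨c,x⟩ with c ∈ ℚ^n. Suppose that for every i ∈ {1,…,p} there exists t_i ∈ ℚ such that for every x ∈ ℝ^n with ⟨a_i,x⟩ = 0 and ⟨a_j,x⟩ ≠ 0 for all j ≠ i, and every v ∈ ℝ^n, there exists ε > 0 with f(x+tv) + f(x−tv) − 2·f(x) = t_i·t·|⟨a_i,v⟩| for all 0 < t < ε. Then there exists c₀ ∈ ℚ^n such that f(x) = ⟨c₀,x⟩ + Σ_{i=1}^p t_i·max(0,⟨a_i,x⟩) for all x ∈ ℝ^n; in particular f ∈ ReLU₀^ℚ(n,1). -/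

import Mathlib

/-- A vector `a ∈ ℤ^n` is primitive if it is nonzero and the gcd of its
coordinates is `1`. -/
def Primitive {n : ℕ} (a : Fin n → ℤ) : Prop :=
  a ≠ 0 ∧ Finset.univ.gcd a = 1

private lemma stmt7_dense (n : ℕ) (b : Fin n → ℝ) (hb : b ≠ 0) : Dense {x : Fin n → ℝ | (∑ k, b k * x k) ≠ 0} := by
  intro x
  rw [Metric.mem_closure_iff]
  intro ε hε
  by_cases h : (∑ k, b k * x k) ≠ 0
  · exact ⟨x, h, by simpa using hε⟩
  · push_neg at h
    have hb2 : (0:ℝ) < ∑ k, b k * b k := by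
      rcases Function.ne_iff.1 hb with ⟨k, hk⟩
      apply Finset.sum_pos' (fun k _ => mul_self_nonneg _)
      exact ⟨k, Finset.mem_univ k, mul_self_pos.2 hk⟩
    set δ := ε / (2 * (‖b‖ + 1)) with hδ
    have hδpos : 0 < δ := by positivity
    refine ⟨x + δ • b, ?_, ?_⟩
    · simp only [Set.mem_setOf_eq, Pi.add_apply, Pi.smul_apply, smul_eq_mul]
      have : ∑ k, b k * (x k + δ * b k) = ∑ k, b k * x k + δ * ∑ k, b k * b k := by
        rw [Finset.mul_sum, ← Finset.sum_add_distrib]; congr 1; ext k; ring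
      rw [this, h, zero_add]
      positivity
    · rw [dist_self_add_right, norm_smul]
      have h1 : ‖b‖ < ‖b‖ + 1 := by linarith
      calc ‖δ‖ * ‖b‖ = δ * ‖b‖ := by rw [Real.norm_eq_abs, abs_of_pos hδpos]
        _ < ε := by
            rw [hδ]
            rw [div_mul_eq_mul_div, div_lt_iff₀ (by positivity)]
            nlinarith [norm_nonneg b]

private def Lm {n p : ℕ} (a : Fin p → Fin n → ℤ) (i : Fin p) (y : Fin n → ℝ) : ℝ :=
  ∑ k, (a i k : ℝ) * y k

private lemma Lm_def {n p : ℕ} (a : Fin p → Fin n → ℤ) (i : Fin p) (y : Fin n → ℝ) :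
    Lm a i y = ∑ k, (a i k : ℝ) * y k := rfl

private lemma stmt7_linadd {n : ℕ} (c x v : Fin n → ℝ) (s : ℝ) :
    ∑ j, c j * (x + s • v) j = ∑ j, c j * x j + s * ∑ j, c j * v j := by
  simp only [Pi.add_apply, Pi.smul_apply, smul_eq_mul, Finset.mul_sum]
  rw [← Finset.sum_add_distrib]
  exact Finset.sum_congr rfl (fun j _ => by ring)

private lemma stmt7_linsub {n : ℕ} (c x v : Fin n → ℝ) (s : ℝ) :
    ∑ j, c j * (x - s • v) j = ∑ j, c j * x j - s * ∑ j, c j * v j := by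
  simp only [Pi.sub_apply, Pi.smul_apply, smul_eq_mul, Finset.mul_sum]
  rw [← Finset.sum_sub_distrib]
  exact Finset.sum_congr rfl (fun j _ => by ring)

private lemma Lm_add {n p : ℕ} (a : Fin p → Fin n → ℤ) (i : Fin p) (x v : Fin n → ℝ) (s : ℝ) :
    Lm a i (x + s • v) = Lm a i x + s * Lm a i v :=
  stmt7_linadd (fun k => (a i k : ℝ)) x v s

private lemma Lm_sub {n p : ℕ} (a : Fin p → Fin n → ℤ) (i : Fin p) (x v : Fin n → ℝ) (s : ℝ) :
    Lm a i (x - s • v) = Lm a i x - s * Lm a i v :=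
  stmt7_linsub (fun k => (a i k : ℝ)) x v s

private lemma Lm_cont {n p : ℕ} (a : Fin p → Fin n → ℤ) (i : Fin p) :
    Continuous (Lm a i) :=
  continuous_finset_sum _ (fun k _ => (continuous_const.mul (continuous_apply k)))

private lemma stmt7_maxabs (r : ℝ) : max 0 r + max 0 (-r) = |r| := by
  rcases le_total 0 r with h | h
  · rw [max_eq_right h, max_eq_left (neg_nonpos.2 h), abs_of_nonneg h, add_zero]
  · rw [max_eq_left h, max_eq_right (neg_nonneg.2 h), abs_of_nonpos h, zero_add]



private lemma stmt7_key1d_half (ψ : ℝ → ℝ) (hc : Continuous ψ)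
    (hsd : ∀ s : ℝ, ∃ ε > 0, ∀ τ : ℝ, 0 < τ → τ < ε → ψ (s+τ) + ψ (s-τ) = 2 * ψ s)
    (δ : ℝ) (hδ : 0 < δ) (h0 : ∀ s : ℝ, |s| < δ → ψ s = 0) : ∀ s, 0 ≤ s → ψ s = 0 := by
  by_contra hcon
  push_neg at hcon
  obtain ⟨s₀, hs₀, hψs₀⟩ := hcon
  set B : Set ℝ := {s | 0 ≤ s ∧ ψ s ≠ 0} with hB
  have hBne : B.Nonempty := ⟨s₀, hs₀, hψs₀⟩
  have hBdd : BddBelow B := ⟨0, fun b hb => hb.1⟩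
  set S := sInf B with hS
  have hlbδ : ∀ b ∈ B, δ ≤ b := by
    intro b hb
    by_contra hbδ
    push_neg at hbδ
    exact hb.2 (h0 b (by rw [abs_of_nonneg hb.1]; exact hbδ))
  have hSδ : δ ≤ S := le_csInf hBne hlbδ
  have hSpos : 0 < S := lt_of_lt_of_le hδ hSδ
  have hzero_lt : ∀ u : ℝ, 0 ≤ u → u < S → ψ u = 0 := by
    intro u hu huS
    by_contra h
    exact absurd (csInf_le hBdd ⟨hu, h⟩) (not_le.2 huS)
  have hψS : ψ S = 0 := by
    have hZ : IsClosed {u : ℝ | ψ u = 0} := isClosed_eq hc continuous_const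
    have h1 : Set.Ico 0 S ⊆ {u : ℝ | ψ u = 0} := fun u hu => hzero_lt u hu.1 hu.2
    have h2 : S ∈ closure (Set.Ico 0 S) := by
      rw [closure_Ico (ne_of_lt hSpos)]
      exact ⟨le_of_lt hSpos, le_refl S⟩
    exact hZ.closure_subset_iff.2 h1 h2
  obtain ⟨ε, hε, hft⟩ := hsd S
  set m := min ε S with hm
  have hmpos : 0 < m := lt_min hε hSpos
  have hzero_ext : ∀ u : ℝ, 0 ≤ u → u < S + m → ψ u = 0 := by
    intro u hu hum
    rcases lt_trichotomy u S with h | h | h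
    · exact hzero_lt u hu h
    · rw [h]; exact hψS
    · have hτ : 0 < u - S := by linarith
      have hτε : u - S < ε := by
        have := min_le_left ε S; rw [← hm] at this; linarith
      have hτS : u - S < S := by
        have := min_le_right ε S; rw [← hm] at this; linarith
      have := hft (u - S) hτ hτε
      have h1 : ψ (S - (u - S)) = 0 := hzero_lt _ (by linarith) (by linarith)
      have h2 : S + (u - S) = u := by ring
      rw [h2, h1, hψS] at this
      linarith
  have : S + m ≤ S := by
    rw [hS]
    apply le_csInf hBne
    intro b hb
    by_contra hbc
    push_neg at hbc
    exact hb.2 (hzero_ext b hb.1 hbc)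
  linarith

private lemma stmt7_key1d (ψ : ℝ → ℝ) (hc : Continuous ψ)
    (hsd : ∀ s : ℝ, ∃ ε > 0, ∀ τ : ℝ, 0 < τ → τ < ε → ψ (s+τ) + ψ (s-τ) = 2 * ψ s)
    (δ : ℝ) (hδ : 0 < δ) (h0 : ∀ s : ℝ, |s| < δ → ψ s = 0) : ∀ s, ψ s = 0 := by
  intro s
  rcases le_or_gt 0 s with h | h
  · exact stmt7_key1d_half ψ hc hsd δ hδ h0 s h
  · have hneg := stmt7_key1d_half (fun u => ψ (-u)) (hc.comp continuous_neg)
      (by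
        intro u
        obtain ⟨ε, hε, hft⟩ := hsd (-u)
        refine ⟨ε, hε, fun τ hτ hτε => ?_⟩
        have := hft τ hτ hτε
        have e1 : -(u + τ) = -u - τ := by ring
        have e2 : -(u - τ) = -u + τ := by ring
        show ψ (-(u + τ)) + ψ (-(u - τ)) = 2 * ψ (-u)
        rw [e1, e2]
        linarith)
      δ hδ (fun u hu => h0 (-u) (by rwa [abs_neg]))
    have := hneg (-s) (by linarith)
    simpa using this

private lemma stmt7_locallin (n p : ℕ) (a : Fin p → Fin n → ℤ) (f : (Fin n → ℝ) → ℝ)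
    (hpl : ∀ x₀ ∈ {y : Fin n → ℝ | ∀ i, (∑ k, (a i k : ℝ) * y k) ≠ 0},
      ∃ c : Fin n → ℚ, ∀ x ∈ closure (connectedComponentIn
          {y : Fin n → ℝ | ∀ i, (∑ k, (a i k : ℝ) * y k) ≠ 0} x₀),
        f x = ∑ j, (c j : ℝ) * x j)
    (t : Fin p → ℚ) (x : Fin n → ℝ) (hx : ∀ i, (∑ k, (a i k : ℝ) * x k) ≠ 0) :
    ∃ c' : Fin n → ℚ, ∃ r > 0, ∀ y ∈ Metric.ball x r,
      f y - ∑ i, (t i : ℝ) * max 0 (∑ k, (a i k : ℝ) * y k) = ∑ j, (c' j : ℝ) * y j := by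
  classical
  set L : Fin p → (Fin n → ℝ) → ℝ := fun i y => ∑ k, (a i k : ℝ) * y k with hL
  have Lc : ∀ i, Continuous (L i) := by
    intro i
    exact continuous_finset_sum _ (fun k _ => (continuous_const.mul (continuous_apply k)))
  set Ω : Set (Fin n → ℝ) := {y | ∀ i, L i y ≠ 0} with hΩ
  have hΩopen : IsOpen Ω := by
    have : Ω = ⋂ i, (L i) ⁻¹' ({0}ᶜ) := by
      ext y; simp [hΩ, Set.mem_iInter]
    rw [this]
    exact isOpen_iInter_of_finite (fun i => (isOpen_compl_singleton).preimage (Lc i))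
  have hxΩ : x ∈ Ω := hx
  set C := connectedComponentIn Ω x with hC
  have hxC : x ∈ C := mem_connectedComponentIn hxΩ
  have hCsub : C ⊆ Ω := connectedComponentIn_subset _ _
  have hCpre : IsPreconnected C := isPreconnected_connectedComponentIn
  obtain ⟨r, hr, hball⟩ := Metric.isOpen_iff.1 hΩopen x hxΩ
  have hballC : Metric.ball x r ⊆ C :=
    (convex_ball x r).isPreconnected.subset_connectedComponentIn (Metric.mem_ball_self hr) hball
  -- sign constancy on closure C
  have hsign : ∀ i, ∀ y ∈ closure C, if 0 < L i x then 0 ≤ L i y else L i y ≤ 0 := by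
    intro i
    have hsC : ∀ y ∈ C, if 0 < L i x then 0 < L i y else L i y < 0 := by
      intro y hy
      by_cases hpos : 0 < L i x
      · simp only [hpos, if_true]
        by_contra hc
        push_neg at hc
        have h0mem : (0:ℝ) ∈ Set.Icc (L i y) (L i x) := ⟨hc, le_of_lt hpos⟩
        obtain ⟨z, hz, hz0⟩ := hCpre.intermediate_value hy hxC ((Lc i).continuousOn) h0mem
        exact hCsub hz i hz0
      · simp only [hpos, if_false]
        have hneg : L i x < 0 := lt_of_le_of_ne (not_lt.1 hpos) (hxΩ i)
        by_contra hc
        push_neg at hc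
        have hyne : L i y ≠ 0 := hCsub hy i
        have h0mem : (0:ℝ) ∈ Set.Icc (L i x) (L i y) := ⟨le_of_lt hneg, hc⟩
        obtain ⟨z, hz, hz0⟩ := hCpre.intermediate_value hxC hy ((Lc i).continuousOn) h0mem
        exact hCsub hz i hz0
    intro y hy
    by_cases hpos : 0 < L i x
    · simp only [hpos, if_true]
      have hclosed : IsClosed {z : Fin n → ℝ | 0 ≤ L i z} :=
        isClosed_le continuous_const (Lc i)
      have hsubset : C ⊆ {z | 0 ≤ L i z} := by
        intro z hz
        have := hsC z hz
        rw [if_pos hpos] at this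
        exact le_of_lt this
      exact hclosed.closure_subset_iff.2 hsubset hy
    · simp only [hpos, if_false]
      have hclosed : IsClosed {z : Fin n → ℝ | L i z ≤ 0} :=
        isClosed_le (Lc i) continuous_const
      have hsubset : C ⊆ {z | L i z ≤ 0} := by
        intro z hz
        have := hsC z hz
        rw [if_neg hpos] at this
        exact le_of_lt this
      exact hclosed.closure_subset_iff.2 hsubset hy
  obtain ⟨c, hc⟩ := hpl x hxΩ
  refine ⟨fun j => c j - ∑ i, if 0 < L i x then t i * (a i j : ℚ) else 0, r, hr, ?_⟩
  intro y hy
  have hyC : y ∈ closure C := subset_closure (hballC hy)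
  have hfy : f y = ∑ j, (c j : ℝ) * y j := hc y hyC
  have hmax : ∀ i, max 0 (L i y) = if 0 < L i x then L i y else 0 := by
    intro i
    have := hsign i y hyC
    by_cases hpos : 0 < L i x
    · rw [if_pos hpos] at this ⊢
      exact max_eq_right this
    · rw [if_neg hpos] at this ⊢
      exact max_eq_left this
  have hcast : ∀ j, ((c j - ∑ i, if 0 < L i x then t i * (a i j : ℚ) else 0 : ℚ) : ℝ)
      = (c j : ℝ) - ∑ i, if 0 < L i x then (t i : ℝ) * (a i j : ℝ) else 0 := by
    intro j
    push_cast [apply_ite (fun q : ℚ => (q : ℝ))]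
    ring
  simp only [hcast]
  rw [hfy]
  simp only [show ∀ i, max 0 (∑ k, (a i k : ℝ) * y k) = if 0 < L i x then L i y else 0 from hmax]
  symm
  calc ∑ j, ((c j : ℝ) - ∑ i, if 0 < L i x then (t i : ℝ) * (a i j : ℝ) else 0) * y j
      = ∑ j, ((c j : ℝ) * y j
          - ∑ i, (if 0 < L i x then (t i : ℝ) * (a i j : ℝ) else 0) * y j) := by
        apply Finset.sum_congr rfl; intro j _; rw [sub_mul, Finset.sum_mul]
    _ = ∑ j, (c j : ℝ) * y j
        - ∑ j, ∑ i, (if 0 < L i x then (t i : ℝ) * (a i j : ℝ) else 0) * y j :=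
        Finset.sum_sub_distrib _ _
    _ = ∑ j, (c j : ℝ) * y j
        - ∑ i, ∑ j, (if 0 < L i x then (t i : ℝ) * (a i j : ℝ) else 0) * y j := by
        rw [Finset.sum_comm]
    _ = ∑ j, (c j : ℝ) * y j - ∑ i, (t i : ℝ) * (if 0 < L i x then L i y else 0) := by
        congr 1
        apply Finset.sum_congr rfl
        intro i _
        by_cases hpos : 0 < L i x
        · simp only [if_pos hpos]; simp only [hL, Finset.mul_sum]
          apply Finset.sum_congr rfl; intro j _; ring
        · simp [if_neg hpos]

private lemma stmt7_core (n p : ℕ) (a : Fin p → Fin n → ℤ) (f : (Fin n → ℝ) → ℝ)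
    (hcont : Continuous f)
    (hpl : ∀ x₀ ∈ {y : Fin n → ℝ | ∀ i, (∑ k, (a i k : ℝ) * y k) ≠ 0},
      ∃ c : Fin n → ℚ, ∀ x ∈ closure (connectedComponentIn
          {y : Fin n → ℝ | ∀ i, (∑ k, (a i k : ℝ) * y k) ≠ 0} x₀),
        f x = ∑ j, (c j : ℝ) * x j)
    (t : Fin p → ℚ)
    (ht : ∀ i, ∀ x : Fin n → ℝ, Lm a i x = 0 → (∀ j, j ≠ i → Lm a j x ≠ 0) →
      ∀ v : Fin n → ℝ, ∃ ε > 0, ∀ s : ℝ, 0 < s → s < ε →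
        f (x + s • v) + f (x - s • v) - 2 * f x = (t i : ℝ) * s * |Lm a i v|)
    (x₀ : Fin n → ℝ) (hx₀ : ∀ i, Lm a i x₀ ≠ 0)
    (c₀ : Fin n → ℚ) (r₀ : ℝ) (hr₀ : 0 < r₀)
    (hlin₀ : ∀ y ∈ Metric.ball x₀ r₀,
      f y - ∑ i, (t i : ℝ) * max 0 (Lm a i y) = ∑ j, (c₀ j : ℝ) * y j)
    (x₁ : Fin n → ℝ) (hx₁ : ∀ i, Lm a i x₁ ≠ 0)
    (hgen : ∀ i j, i ≠ j → Lm a i x₀ * Lm a j x₁ - Lm a j x₀ * Lm a i x₁ ≠ 0) :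
    f x₁ - ∑ i, (t i : ℝ) * max 0 (Lm a i x₁) = ∑ j, (c₀ j : ℝ) * x₁ j := by
  classical
  set v : Fin n → ℝ := x₁ - x₀ with hv
  set g : (Fin n → ℝ) → ℝ := fun y => f y - ∑ i, (t i : ℝ) * max 0 (Lm a i y) with hg
  have hgc : Continuous g :=
    hcont.sub (continuous_finset_sum _ (fun i _ =>
      continuous_const.mul (continuous_const.max (Lm_cont a i))))
  set P : ℝ := ∑ j, (c₀ j : ℝ) * x₀ j with hP
  set Q : ℝ := ∑ j, (c₀ j : ℝ) * v j with hQ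
  set φ : ℝ → ℝ := fun s => g (x₀ + s • v) - (P + s * Q) with hφ
  have hφc : Continuous φ := by
    apply Continuous.sub
    · exact hgc.comp (continuous_const.add (continuous_id.smul continuous_const))
    · exact continuous_const.add (continuous_id.mul continuous_const)
  -- second difference condition
  have hx₁v : x₀ + (1:ℝ) • v = x₁ := by rw [one_smul, hv]; abel
  have hsd : ∀ s : ℝ, ∃ ε > 0, ∀ τ : ℝ, 0 < τ → τ < ε → φ (s+τ) + φ (s-τ) = 2 * φ s := by
    intro s
    set x : Fin n → ℝ := x₀ + s • v with hxdef
    suffices h : ∃ ε > 0, ∀ τ : ℝ, 0 < τ → τ < ε →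
        g (x + τ • v) + g (x - τ • v) = 2 * g x by
      obtain ⟨ε, hε, hgd⟩ := h
      refine ⟨ε, hε, ?_⟩
      intro τ hτ hτε
      have eplus : x₀ + (s+τ) • v = x + τ • v := by rw [hxdef, add_smul]; abel
      have eminus : x₀ + (s-τ) • v = x - τ • v := by rw [hxdef, sub_smul]; abel
      simp only [hφ]
      rw [eplus, eminus]
      have h2 := hgd τ hτ hτε
      ring_nf
      ring_nf at h2
      linarith [h2]
    by_cases hcase : ∀ i, Lm a i x ≠ 0
    · -- interior case: g is linear near x
      obtain ⟨c', r', hr', hlin'⟩ := stmt7_locallin n p a f hpl t x hcase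
      refine ⟨r' / (‖v‖ + 1), by positivity, ?_⟩
      intro τ hτ hτε
      have hmul : τ * (‖v‖ + 1) < r' := by
        have := (lt_div_iff₀ (by positivity : (0:ℝ) < ‖v‖ + 1)).1 hτε
        linarith
      have hnorm : ‖τ • v‖ < r' := by
        rw [norm_smul, Real.norm_eq_abs, abs_of_pos hτ]
        nlinarith [norm_nonneg v]
      have hp1 : x + τ • v ∈ Metric.ball x r' := by
        rw [Metric.mem_ball, dist_comm, dist_self_add_right]; exact hnorm
      have hp2 : x - τ • v ∈ Metric.ball x r' := by
        rw [Metric.mem_ball, dist_comm, dist_self_sub_right]; exact hnorm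
      have h0 := hlin' x (Metric.mem_ball_self hr')
      have h1 := hlin' _ hp1
      have h2 := hlin' _ hp2
      have e1 : ∑ j, (c' j : ℝ) * (x + τ • v) j
          = (∑ j, (c' j:ℝ) * x j) + τ * ∑ j, (c' j:ℝ) * v j :=
        stmt7_linadd (fun j => ((c' j : ℝ))) x v τ
      have e2 : ∑ j, (c' j : ℝ) * (x - τ • v) j
          = (∑ j, (c' j:ℝ) * x j) - τ * ∑ j, (c' j:ℝ) * v j :=
        stmt7_linsub (fun j => ((c' j : ℝ))) x v τ
      have hg0 : g x = ∑ j, (c' j:ℝ) * x j := h0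
      have hg1 : g (x + τ • v) = ∑ j, (c' j : ℝ) * (x + τ • v) j := h1
      have hg2 : g (x - τ • v) = ∑ j, (c' j : ℝ) * (x - τ • v) j := h2
      rw [hg0, hg1, hg2, e1, e2]
      ring
    · -- wall case
      push_neg at hcase
      obtain ⟨i, hLix⟩ := hcase
      have huniq : ∀ j, j ≠ i → Lm a j x ≠ 0 := by
        intro j hji hLjx
        have hIx : Lm a i x₀ + s * Lm a i v = 0 := by
          rw [← Lm_add a i x₀ v s]; exact hLix
        have hJx : Lm a j x₀ + s * Lm a j v = 0 := by
          rw [← Lm_add a j x₀ v s]; exact hLjx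
        have hIx₁ : Lm a i x₁ = Lm a i x₀ + Lm a i v := by
          rw [← hx₁v, Lm_add, one_mul]
        have hJx₁ : Lm a j x₁ = Lm a j x₀ + Lm a j v := by
          rw [← hx₁v, Lm_add, one_mul]
        refine hgen i j (Ne.symm hji) ?_
        rw [hIx₁, hJx₁]
        linear_combination (Lm a j v) * hIx - (Lm a i v) * hJx
      obtain ⟨ε₁, hε₁, hft⟩ := ht i x hLix huniq v
      set E : Fin p → ℝ := fun j => if j = i ∨ Lm a j v = 0 then ε₁
        else |Lm a j x| / |Lm a j v| with hE
      have hEpos : ∀ j, 0 < E j := by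
        intro j
        by_cases hj : j = i ∨ Lm a j v = 0
        · simp only [hE]; rw [if_pos hj]; exact hε₁
        · push_neg at hj
          simp only [hE]; rw [if_neg (by push_neg; exact hj)]
          exact div_pos (abs_pos.2 (huniq j hj.1)) (abs_pos.2 hj.2)
      refine ⟨Finset.univ.inf' ⟨i, Finset.mem_univ i⟩ E, ?_, ?_⟩
      · exact (Finset.lt_inf'_iff _).2 (fun j _ => hEpos j)
      intro τ hτ hτε
      have hτE : ∀ j, τ < E j := fun j =>
        lt_of_lt_of_le hτε (Finset.inf'_le E (Finset.mem_univ j))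
      have hτε₁ : τ < ε₁ := by
        have := hτE i
        simp only [hE] at this
        simpa using this
      have hft' := hft τ hτ hτε₁
      have hdiff : ∀ j, (t j:ℝ) * max 0 (Lm a j (x + τ•v)) + (t j:ℝ) * max 0 (Lm a j (x - τ•v))
          - 2*((t j:ℝ) * max 0 (Lm a j x))
          = if j = i then (t i:ℝ) * τ * |Lm a i v| else 0 := by
        intro j
        by_cases hji : j = i
        · subst hji
          rw [if_pos rfl, Lm_add, Lm_sub, hLix, zero_add, zero_sub]
          have hma := stmt7_maxabs (τ * Lm a j v)
          have habs : |τ * Lm a j v| = τ * |Lm a j v| := by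
            rw [abs_mul, abs_of_pos hτ]
          rw [habs] at hma
          have hmz : max (0:ℝ) 0 = 0 := max_self 0
          rw [hmz]
          linear_combination ((t j : ℝ)) * hma
        · rw [if_neg hji]
          have hLjx : Lm a j x ≠ 0 := huniq j hji
          by_cases hjv : Lm a j v = 0
          · rw [Lm_add, Lm_sub, hjv, mul_zero, add_zero, sub_zero]; ring
          · have hτEj : τ < |Lm a j x| / |Lm a j v| := by
              have := hτE j
              simp only [hE] at this
              rwa [if_neg (by push_neg; exact ⟨hji, hjv⟩)] at this
            have hbound : τ * |Lm a j v| < |Lm a j x| :=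
              (lt_div_iff₀ (abs_pos.2 hjv)).1 hτEj
            have hb1 : τ * Lm a j v ≤ τ * |Lm a j v| :=
              mul_le_mul_of_nonneg_left (le_abs_self _) (le_of_lt hτ)
            have hb2 : -(τ * |Lm a j v|) ≤ τ * Lm a j v := by
              have := neg_abs_le (Lm a j v)
              nlinarith
            rw [Lm_add, Lm_sub]
            rcases lt_or_gt_of_ne hLjx with hneg | hpos
            · have habsx : |Lm a j x| = -(Lm a j x) := abs_of_neg hneg
              have h1 : Lm a j x + τ * Lm a j v ≤ 0 := by nlinarith
              have h2 : Lm a j x - τ * Lm a j v ≤ 0 := by nlinarith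
              rw [max_eq_left h1, max_eq_left h2, max_eq_left (le_of_lt hneg)]; ring
            · have habsx : |Lm a j x| = Lm a j x := abs_of_pos hpos
              have h1 : (0:ℝ) ≤ Lm a j x + τ * Lm a j v := by nlinarith
              have h2 : (0:ℝ) ≤ Lm a j x - τ * Lm a j v := by nlinarith
              rw [max_eq_right h1, max_eq_right h2, max_eq_right (le_of_lt hpos)]; ring
      have hsum3 : (∑ j, (t j:ℝ) * max 0 (Lm a j (x + τ•v)))
          + (∑ j, (t j:ℝ) * max 0 (Lm a j (x - τ•v)))
          - 2*(∑ j, (t j:ℝ) * max 0 (Lm a j x)) = (t i:ℝ) * τ * |Lm a i v| := by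
        rw [Finset.mul_sum, ← Finset.sum_add_distrib, ← Finset.sum_sub_distrib]
        rw [Finset.sum_congr rfl (fun j _ => hdiff j)]
        rw [Finset.sum_ite_eq' Finset.univ i (fun _ => (t i:ℝ) * τ * |Lm a i v|)]
        simp
      show g (x + τ•v) + g (x - τ•v) = 2 * g x
      simp only [hg]
      linarith [hft', hsum3]
  -- φ vanishes near 0
  have hδ0 : ∃ δ > 0, ∀ s : ℝ, |s| < δ → φ s = 0 := by
    refine ⟨r₀ / (‖v‖ + 1), by positivity, ?_⟩
    intro s hs
    have hmem : x₀ + s • v ∈ Metric.ball x₀ r₀ := by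
      rw [Metric.mem_ball, dist_comm, dist_self_add_right, norm_smul, Real.norm_eq_abs]
      have h1 : 0 ≤ ‖v‖ := norm_nonneg v
      have h2 : |s| * (‖v‖+1) < r₀ := by
        rcases eq_or_lt_of_le (abs_nonneg s) with h | h
        · rw [← h]; simpa using hr₀
        · calc |s| * (‖v‖+1) < (r₀ / (‖v‖ + 1)) * (‖v‖+1) := by
                apply mul_lt_mul_of_pos_right hs (by positivity)
            _ = r₀ := by field_simp
      nlinarith
    have := hlin₀ _ hmem
    simp only [hφ]
    rw [show g (x₀ + s • v) = f (x₀ + s•v) - ∑ i, (t i : ℝ) * max 0 (Lm a i (x₀ + s•v)) from rfl]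
    rw [this, stmt7_linadd (fun j => ((c₀ j : ℝ))) x₀ v s]
    simp [hP, hQ]
  obtain ⟨δ, hδpos, hδ⟩ := hδ0
  have hφ0 : ∀ s, φ s = 0 := stmt7_key1d φ hφc hsd δ hδpos hδ
  have h1 := hφ0 1
  simp only [hφ] at h1
  have hx₁v : x₀ + (1:ℝ) • v = x₁ := by rw [one_smul, hv]; abel
  rw [hx₁v] at h1
  have hPQ : P + 1 * Q = ∑ j, (c₀ j : ℝ) * x₁ j := by
    rw [hP, hQ, ← stmt7_linadd (fun j => ((c₀ j : ℝ))) x₀ v 1, hx₁v]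
  have : g x₁ = ∑ j, (c₀ j : ℝ) * x₁ j := by linarith
  simpa [hg] using this

theorem stmt7 (n p : ℕ) (hn : 1 ≤ n) (hp : 1 ≤ p)
    (a : Fin p → Fin n → ℤ) (ha : ∀ i, Primitive (a i))
    (hpar : ∀ i j, i ≠ j → ∀ c : ℝ,
      (fun k => (a i k : ℝ)) ≠ c • fun k => (a j k : ℝ))
    (f : (Fin n → ℝ) → ℝ) (hcont : Continuous f)
    (hpl : ∀ x₀ ∈ {y : Fin n → ℝ | ∀ i, (∑ k, (a i k : ℝ) * y k) ≠ 0},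
      ∃ c : Fin n → ℚ, ∀ x ∈ closure (connectedComponentIn
          {y : Fin n → ℝ | ∀ i, (∑ k, (a i k : ℝ) * y k) ≠ 0} x₀),
        f x = ∑ j, (c j : ℝ) * x j)
    (t : Fin p → ℚ)
    (ht : ∀ i, ∀ x : Fin n → ℝ, (∑ k, (a i k : ℝ) * x k) = 0 →
      (∀ j, j ≠ i → (∑ k, (a j k : ℝ) * x k) ≠ 0) →
      ∀ v : Fin n → ℝ, ∃ ε > 0, ∀ s : ℝ, 0 < s → s < ε →
        f (x + s • v) + f (x - s • v) - 2 * f x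
          = (t i : ℝ) * s * |∑ k, (a i k : ℝ) * v k|) :
    ∃ c₀ : Fin n → ℚ, ∀ x : Fin n → ℝ,
      f x = (∑ j, (c₀ j : ℝ) * x j)
        + ∑ i, (t i : ℝ) * max 0 (∑ k, (a i k : ℝ) * x k) := by
  classical
  have haR : ∀ i, (fun k => (a i k : ℝ)) ≠ 0 := by
    intro i hcontra
    apply (ha i).1
    funext k
    simp only [Pi.zero_apply]
    have h0 : ((a i k : ℤ) : ℝ) = 0 := by simpa using congrFun hcontra k
    exact_mod_cast h0
  have hWo : ∀ (b : Fin n → ℝ), IsOpen {x : Fin n → ℝ | (∑ k, b k * x k) ≠ 0} := by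
    intro b
    have hcb : Continuous fun x : Fin n → ℝ => ∑ k, b k * x k :=
      continuous_finset_sum _ (fun k _ => continuous_const.mul (continuous_apply k))
    exact isOpen_compl_singleton.preimage hcb
  -- find a base chamber point
  have hdense₀ : Dense (⋂ i, {y : Fin n → ℝ | Lm a i y ≠ 0}) := by
    apply dense_iInter_of_isOpen
    · intro i; exact hWo _
    · intro i; exact stmt7_dense n _ (haR i)
  obtain ⟨x₀, hx₀mem⟩ := hdense₀.nonempty
  have hx₀ : ∀ i, Lm a i x₀ ≠ 0 := by
    intro i; exact Set.mem_iInter.1 hx₀mem i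
  obtain ⟨c₀, r₀, hr₀, hlin₀⟩ := stmt7_locallin n p a f hpl t x₀ hx₀
  refine ⟨c₀, ?_⟩
  -- the dense good set
  set W : (Fin p ⊕ Fin p × Fin p) → Set (Fin n → ℝ) := fun q =>
    Sum.elim (fun i => {y : Fin n → ℝ | (∑ k, (a i k : ℝ) * y k) ≠ 0})
      (fun q => if q.1 = q.2 then Set.univ else
        {y : Fin n → ℝ |
          (∑ k, (Lm a q.1 x₀ * (a q.2 k : ℝ) - Lm a q.2 x₀ * (a q.1 k : ℝ)) * y k) ≠ 0}) q
    with hW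
  have hGdense : Dense (⋂ q, W q) := by
    apply dense_iInter_of_isOpen
    · rintro (i | ⟨i, j⟩)
      · exact hWo _
      · simp only [hW, Sum.elim_inr]
        by_cases hij : i = j
        · rw [if_pos hij]; exact isOpen_univ
        · rw [if_neg hij]; exact hWo _
    · rintro (i | ⟨i, j⟩)
      · exact stmt7_dense n _ (haR i)
      · simp only [hW, Sum.elim_inr]
        by_cases hij : i = j
        · rw [if_pos hij]; exact dense_univ
        · rw [if_neg hij]
          apply stmt7_dense
          intro hb0
          apply hpar i j hij (Lm a i x₀ / Lm a j x₀)
          funext k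
          have hk := congrFun hb0 k
          simp only [Pi.zero_apply] at hk
          have hβ : Lm a j x₀ ≠ 0 := hx₀ j
          simp only [Pi.smul_apply, smul_eq_mul]
          field_simp
          linarith
  -- g agrees with the linear map on the good set
  set g : (Fin n → ℝ) → ℝ := fun y => f y - ∑ i, (t i : ℝ) * max 0 (Lm a i y) with hg
  have hgc : Continuous g :=
    hcont.sub (continuous_finset_sum _ (fun i _ =>
      continuous_const.mul (continuous_const.max (Lm_cont a i))))
  have hlinc : Continuous (fun y : Fin n → ℝ => ∑ j, (c₀ j : ℝ) * y j) :=
    continuous_finset_sum _ (fun j _ => continuous_const.mul (continuous_apply j))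
  have hkey : Set.EqOn g (fun y => ∑ j, (c₀ j : ℝ) * y j) (⋂ q, W q) := by
    intro x₁ hx₁mem
    have hx₁ : ∀ i, Lm a i x₁ ≠ 0 := by
      intro i
      exact Set.mem_iInter.1 hx₁mem (Sum.inl i)
    have hgen : ∀ i j, i ≠ j →
        Lm a i x₀ * Lm a j x₁ - Lm a j x₀ * Lm a i x₁ ≠ 0 := by
      intro i j hij hc
      have hm := Set.mem_iInter.1 hx₁mem (Sum.inr (i, j))
      simp only [hW, Sum.elim_inr, if_neg hij, Set.mem_setOf_eq] at hm
      apply hm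
      have hexp : ∑ k, (Lm a i x₀ * (a j k : ℝ) - Lm a j x₀ * (a i k : ℝ)) * x₁ k
          = Lm a i x₀ * Lm a j x₁ - Lm a j x₀ * Lm a i x₁ := by
        simp only [Lm_def, Finset.mul_sum]
        rw [← Finset.sum_sub_distrib]
        exact Finset.sum_congr rfl (fun k _ => by ring)
      rw [hexp]
      exact hc
    exact stmt7_core n p a f hcont hpl t ht x₀ hx₀ c₀ r₀ hr₀ hlin₀ x₁ hx₁ hgen
  have heq := Continuous.ext_on hGdense hgc hlinc hkey
  intro x
  have hx := congrFun heq x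
  simp only [hg] at hx
  simp only [← Lm_def]
  linarith
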